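/- For the qubit depolarizing channel with parameter p ∈ [0,1], the Choi matrix is C_p = [[1−p/2, 0, 0, 1−p],[0, p/2, 0, 0],[0, 0, p/2, 0],[1−p, 0, 0, 1−p/2]], and the antidegradability inequality 2 ≥ tr(C_p²) − 4√(det C_p) holds if and only if p ≥ 1/3. Here tr(C_p²) = 3p² − 6p + 4 and 16·det(C_p) = p³(4 − 3p), so the inequality reads 2 ≥ 3p² − 6p + 4 − √(p³(4−3p)). -/

import Mathlib

open Matrix

theorem stmt_13 (p : ℝ) (hp0 : 0 ≤ p) (hp1 : p ≤ 1) :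
    let C : Matrix (Fin 4) (Fin 4) ℝ :=
      !![1-p/2, 0, 0, 1-p;
         0, p/2, 0, 0;
         0, 0, p/2, 0;
         1-p, 0, 0, 1-p/2]
    (C * C).trace = 3*p^2 - 6*p + 4 ∧
    16 * C.det = p^3 * (4 - 3*p) ∧
    ((2 : ℝ) ≥ (C * C).trace - 4 * Real.sqrt C.det ↔ p ≥ 1/3) := by
  intro C
  have htr : (C * C).trace = 3*p^2 - 6*p + 4 := by
    simp [C, Matrix.trace, Matrix.mul_apply, Fin.sum_univ_four]
    ring
  have hdet : C.det = p^3 * (4 - 3*p) / 16 := by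
    simp [C, Matrix.det_succ_row_zero, Fin.sum_univ_succ, Fin.castSucc, Fin.castAdd, Fin.castLE]
    simp [show Fin.succAbove (3 : Fin 4) (2 : Fin 3) = 2 from by decide]
    ring
  refine ⟨htr, by rw [hdet]; ring, ?_⟩
  rw [htr, hdet]
  have hq : (0:ℝ) ≤ p^3 * (4 - 3*p) := by nlinarith [pow_nonneg hp0 3]
  have hs : 4 * Real.sqrt (p^3 * (4 - 3*p) / 16) = Real.sqrt (p^3 * (4 - 3*p)) := by
    rw [Real.sqrt_div hq 16, show Real.sqrt 16 = 4 by
      rw [show (16:ℝ) = 4^2 by norm_num, Real.sqrt_sq (by norm_num)]]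
    ring
  rw [hs]
  constructor
  · intro h
    by_contra hc
    push_neg at hc
    have hr : (0:ℝ) < 3*p^2 - 6*p + 2 := by nlinarith
    have h2 : 3*p^2 - 6*p + 2 ≤ Real.sqrt (p^3 * (4 - 3*p)) := by linarith
    have h3 : (3*p^2 - 6*p + 2)^2 ≤ p^3 * (4 - 3*p) := by
      have := Real.sq_sqrt hq
      nlinarith [Real.sqrt_nonneg (p^3 * (4 - 3*p))]
    nlinarith [sq_nonneg (p - 1), sq_nonneg (3*p - 1), sq_nonneg p]
  · intro h
    rcases le_or_gt (3*p^2 - 6*p + 2) 0 with hr | hr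
    · nlinarith [Real.sqrt_nonneg (p^3 * (4 - 3*p))]
    · have h3 : (3*p^2 - 6*p + 2)^2 ≤ p^3 * (4 - 3*p) := by
        nlinarith [sq_nonneg (p - 1), sq_nonneg (3*p - 1), mul_nonneg (mul_nonneg (sq_nonneg (p-1)) (by linarith : (0:ℝ) ≤ 1 - p)) (by linarith : (0:ℝ) ≤ 3*p - 1)]
      have h2 : 3*p^2 - 6*p + 2 ≤ Real.sqrt (p^3 * (4 - 3*p)) := by
        have := Real.sqrt_le_sqrt h3
        rwa [Real.sqrt_sq (le_of_lt hr)] at this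
      linarith
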